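/- The number of words of length n over the alphabet {1, 2, 3} that contain at least one occurrence of the adjacent factor 13 or of the adjacent factor 31 equals 3^n - u_n, where u_n is defined by u_0 = 1, u_1 = 3, u_n = 2 u_{n-1} + u_{n-2}. -/

import Mathlib

def ContainsFactor (n : ℕ) (w : Fin n → Fin 3) : Prop :=
  ∃ i : Fin n, ∃ h : (i : ℕ) + 1 < n,
    (w i = 0 ∧ w ⟨(i : ℕ) + 1, h⟩ = 2) ∨ (w i = 2 ∧ w ⟨(i : ℕ) + 1, h⟩ = 0)

instance (n : ℕ) : DecidablePred (ContainsFactor n) := fun _ => by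
  unfold ContainsFactor; infer_instance

def uRec : ℕ → ℕ
  | 0 => 1
  | 1 => 3
  | n + 2 => 2 * uRec (n + 1) + uRec n

open Finset

def bad (a b : Fin 3) : Prop := (a = 0 ∧ b = 2) ∨ (a = 2 ∧ b = 0)

instance : DecidableRel bad := fun a b => by unfold bad; infer_instance

def A (n : ℕ) : ℕ :=
  (univ.filter (fun w : Fin n → Fin 3 => ¬ ContainsFactor n w)).card

def F (n : ℕ) (c : Fin 3) : ℕ :=
  (univ.filter (fun w : Fin (n+1) → Fin 3 =>
    ¬ ContainsFactor (n+1) w ∧ w (Fin.last n) = c)).card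

lemma contains_split (n : ℕ) (w : Fin (n+1+1) → Fin 3) :
    ContainsFactor (n+1+1) w ↔
      ContainsFactor (n+1) (Fin.init w) ∨
        bad (w (Fin.castSucc (Fin.last n))) (w (Fin.last (n+1))) := by
  constructor
  · rintro ⟨i, h, hb⟩
    by_cases hi : (i : ℕ) + 1 < n + 1
    · left
      refine ⟨⟨i, by omega⟩, hi, ?_⟩
      have e1 : Fin.init w ⟨(i:ℕ), by omega⟩ = w i := by
        simp [Fin.init, Fin.castSucc, Fin.castAdd, Fin.castLE]
      have e2 : Fin.init w ⟨(i:ℕ)+1, hi⟩ = w ⟨(i:ℕ)+1, h⟩ := by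
        simp [Fin.init, Fin.castSucc, Fin.castAdd, Fin.castLE]
      rw [e1, e2]; exact hb
    · right
      have hi' : (i:ℕ) = n := by omega
      have e1 : w (Fin.castSucc (Fin.last n)) = w i := by
        congr 1; ext; simp [hi']
      have e2 : w (Fin.last (n+1)) = w ⟨(i:ℕ)+1, h⟩ := by
        congr 1; ext; simp [hi']
      rw [e1, e2]; exact hb
  · rintro (⟨i, h, hb⟩ | hb)
    · refine ⟨⟨i, by omega⟩, by simp; omega, ?_⟩
      have e1 : w ⟨(i:ℕ), by omega⟩ = Fin.init w i := by
        simp [Fin.init, Fin.castSucc, Fin.castAdd, Fin.castLE]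
      have e2 : w ⟨(i:ℕ)+1, by omega⟩ = Fin.init w ⟨(i:ℕ)+1, h⟩ := by
        simp [Fin.init, Fin.castSucc, Fin.castAdd, Fin.castLE]
      simp only [e1, e2]
      exact hb
    · exact ⟨Fin.castSucc (Fin.last n), by simp, by
        have : (⟨((Fin.castSucc (Fin.last n)) : ℕ) + 1, by simp⟩ : Fin (n+1+1)) = Fin.last (n+1) := by
          ext; simp
        rw [this]; exact hb⟩

lemma F_succ (n : ℕ) (c : Fin 3) :
    F (n+1) c = ∑ c' : Fin 3, if bad c' c then 0 else F n c' := by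
  have step1 : F (n+1) c =
      (univ.filter (fun v : Fin (n+1) → Fin 3 =>
        ¬ ContainsFactor (n+1) v ∧ ¬ bad (v (Fin.last n)) c)).card := by
    refine Finset.card_nbij' (fun w => Fin.init w) (fun v => Fin.snoc v c) ?_ ?_ ?_ ?_
    · intro w hw
      simp only [Finset.mem_coe, mem_filter, mem_univ, true_and] at hw ⊢
      rw [contains_split] at hw
      push_neg at hw
      obtain ⟨⟨h1, h2⟩, h3⟩ := hw
      refine ⟨h1, ?_⟩
      have : Fin.init w (Fin.last n) = w (Fin.castSucc (Fin.last n)) := rfl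
      rw [this, ← h3]; exact h2
    · intro v hv
      simp only [Finset.mem_coe, mem_filter, mem_univ, true_and] at hv ⊢
      rw [contains_split]
      push_neg
      refine ⟨⟨?_, ?_⟩, ?_⟩
      · rw [Fin.init_snoc]; exact hv.1
      · rw [Fin.snoc_castSucc, Fin.snoc_last]; exact hv.2
      · exact Fin.snoc_last _ _
    · intro w hw
      simp only [Finset.mem_coe, mem_filter, mem_univ, true_and] at hw
      rw [← hw.2]
      exact Fin.snoc_init_self w
    · intro v _
      exact Fin.init_snoc _ _
  rw [step1]
  rw [Finset.card_eq_sum_card_fiberwise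
    (f := fun v : Fin (n+1) → Fin 3 => v (Fin.last n)) (t := univ) (fun _ _ => mem_univ _)]
  apply Finset.sum_congr rfl
  intro c' _
  by_cases hb : bad c' c
  · simp only [hb, if_true]
    rw [Finset.card_eq_zero]
    ext v
    simp only [mem_filter, mem_univ, true_and, Finset.notMem_empty, iff_false]
    rintro ⟨⟨_, h2⟩, h3⟩
    exact h2 (h3 ▸ hb)
  · simp only [hb, if_false]
    unfold F
    congr 1
    ext v
    simp only [mem_filter, mem_univ, true_and]
    constructor
    · rintro ⟨⟨h1, _⟩, h3⟩; exact ⟨h1, h3⟩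
    · rintro ⟨h1, h3⟩; exact ⟨⟨h1, h3 ▸ hb⟩, h3⟩

lemma A_succ (n : ℕ) : A (n+1) = ∑ c : Fin 3, F n c := by
  unfold A
  rw [Finset.card_eq_sum_card_fiberwise
    (f := fun v : Fin (n+1) → Fin 3 => v (Fin.last n)) (t := univ) (fun _ _ => mem_univ _)]
  apply Finset.sum_congr rfl
  intro c _
  unfold F
  congr 1
  ext v
  simp only [mem_filter, mem_univ, true_and, and_true]

lemma F_zero (c : Fin 3) : F 0 c = 1 := by revert c; decide

lemma A_zero : A 0 = 1 := by decide

lemma main (n : ℕ) : F n 1 = uRec n ∧ F n 0 + F n 1 + F n 2 = uRec (n+1) := by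
  induction n with
  | zero => refine ⟨F_zero 1, ?_⟩; simp [F_zero]; rfl
  | succ n ih =>
    obtain ⟨h1, h2⟩ := ih
    have e0 : F (n+1) 0 = F n 0 + F n 1 := by
      rw [F_succ, Fin.sum_univ_three,
        if_neg (by decide), if_neg (by decide), if_pos (by decide)]
      omega
    have e1 : F (n+1) 1 = F n 0 + F n 1 + F n 2 := by
      rw [F_succ, Fin.sum_univ_three,
        if_neg (by decide), if_neg (by decide), if_neg (by decide)]
    have e2 : F (n+1) 2 = F n 1 + F n 2 := by
      rw [F_succ, Fin.sum_univ_three,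
        if_pos (by decide), if_neg (by decide), if_neg (by decide)]
      omega
    constructor
    · rw [e1, h2]
    · rw [e0, e1, e2]
      show _ = uRec (n+2)
      rw [uRec]
      omega

lemma A_eq (n : ℕ) : A n = uRec n := by
  cases n with
  | zero => exact A_zero
  | succ n =>
    rw [A_succ, Fin.sum_univ_three]
    have := main n
    omega

theorem stmt_14 (n : ℕ) :
    Fintype.card {w : Fin n → Fin 3 // ContainsFactor n w} = 3 ^ n - uRec n := by
  have hc : Fintype.card {w : Fin n → Fin 3 // ¬ ContainsFactor n w} = uRec n := by
    rw [Fintype.card_subtype]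
    exact A_eq n
  have hcompl : Fintype.card {w : Fin n → Fin 3 // ¬ ContainsFactor n w}
      = Fintype.card (Fin n → Fin 3) - Fintype.card {w : Fin n → Fin 3 // ContainsFactor n w} :=
    Fintype.card_subtype_compl _
  have hle : Fintype.card {w : Fin n → Fin 3 // ContainsFactor n w} ≤ Fintype.card (Fin n → Fin 3) :=
    Fintype.card_subtype_le _
  have hcard : Fintype.card (Fin n → Fin 3) = 3 ^ n := by simp
  omega
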